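/- arXiv:2109.08140 — 5 statements merged into one kernel-verified Lean document; each statement's English description precedes it below -/
import Mathlib

section
/- Let K be a maximal valued field (spherically complete: every pairwise-consistent family of congruences x ≡ αᵣ mod Iᵣ by fractional/integral ideals has a simultaneous solution). Then every O-submodule N of K^n admits an upper triangular basis: there exist a₁, …, aₙ ∈ K^n forming an upper triangular invertible matrix [a₁ … aₙ] and O-submodules I₁, …, Iₙ of K (each equal to K, O, or an ideal/fractional ideal of O) such that N = {a₁x₁ + ⋯ + aₙxₙ : xᵢ ∈ Iᵢ}. In particular N is isomorphic as an O-module to a direct sum ⊕ᵢ Iᵢ. -/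
namespace UTB
variable {K : Type} [Field K] {O : ValuationSubring K}

lemma osmul_def (r : O) (x : K) : r • x = (r : K) * x := rfl

lemma osmul_pi {n : ℕ} (r : O) (x : Fin n → K) : r • x = (r : K) • x := by
  funext i; rfl

/-- multiplication by a field element as an `O`-linear map -/
def mulL (c : K) : K →ₗ[O] K where
  toFun x := c * x
  map_add' := mul_add c
  map_smul' r x := by simp only [osmul_def, RingHom.id_apply]; ring

@[simp] lemma mulL_apply (c x : K) : mulL (O := O) c x = c * x := rfl

/-- `Fin.snoc · 0` as a `K`-linear map -/
def snocL (n : ℕ) : (Fin n → K) →ₗ[K] (Fin (n + 1) → K) where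
  toFun x := Fin.snoc x 0
  map_add' x y := by
    funext i
    refine Fin.lastCases ?_ (fun i => ?_) i <;>
      simp [Fin.snoc_last, Fin.snoc_castSucc]
  map_smul' c x := by
    funext i
    refine Fin.lastCases ?_ (fun i => ?_) i <;>
      simp [Fin.snoc_last, Fin.snoc_castSucc]

@[simp] lemma snocL_apply {n : ℕ} (x : Fin n → K) : snocL n x = Fin.snoc x 0 := rfl

/-- every `O`-submodule of `K` is `K` itself or a fractional/integral ideal -/
lemma submodule_cases (M : Submodule O K) :
    M = ⊤ ∨ ∃ (b : K) (J : Ideal O),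
      (M : Set K) = (fun x => b * x) '' (Subtype.val '' (J : Set O)) := by
  by_cases h : M = ⊤
  · exact Or.inl h
  · right
    obtain ⟨x, hx⟩ : ∃ x : K, x ∉ M := by
      by_contra hc; push_neg at hc; exact h (Submodule.eq_top_iff'.2 hc)
    have hx0 : x ≠ 0 := fun h0 => hx (h0 ▸ M.zero_mem)
    have hsub : ∀ m ∈ M, m / x ∈ O := by
      intro m hm
      rcases eq_or_ne m 0 with rfl | hm0
      · simpa using O.zero_mem
      · by_contra hnot
        rcases O.mem_or_inv_mem (m / x) with h1 | h1
        · exact hnot h1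
        · have h2 : x / m ∈ O := by
            rwa [div_eq_mul_inv, mul_inv, inv_inv, mul_comm, ← div_eq_mul_inv] at h1
          have := M.smul_mem ⟨x / m, h2⟩ hm
          rw [osmul_def] at this
          simp only [div_mul_cancel₀ _ hm0] at this
          exact hx this
    refine ⟨x, { carrier := {t : O | x * (t : K) ∈ M}
                 add_mem' := fun {a b} ha hb => by
                   simpa [mul_add] using M.add_mem ha hb
                 zero_mem' := by simpa using M.zero_mem
                 smul_mem' := fun r t ht => by
                   have := M.smul_mem r ht
                   rw [osmul_def] at this
                   simpa [Submonoid.coe_mul, mul_comm, mul_left_comm] using this }, ?_⟩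
    ext m
    simp only [SetLike.mem_coe, Set.mem_image, exists_exists_and_eq_and]
    constructor
    · intro hm
      refine ⟨⟨m / x, hsub m hm⟩, ?_, ?_⟩
      · show x * (m / x) ∈ M
        rwa [mul_div_cancel₀ _ hx0]
      · show x * (m / x) = m
        rw [mul_div_cancel₀ _ hx0]
    · rintro ⟨t, ht, rfl⟩
      exact ht


lemma init_sub {n : ℕ} (y z : Fin (n+1) → K) :
    Fin.init (y - z) = Fin.init y - Fin.init z := rfl

lemma init_smul {n : ℕ} (c : K) (y : Fin (n+1) → K) :
    Fin.init (c • y) = c • Fin.init y := rfl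

lemma osmul_pi_eq {n : ℕ} (r : O) (x : Fin n → K) : r • x = (r : K) • x := rfl

set_option maxHeartbeats 800000 in
lemma exists_splitting
    (hmax : ∀ (ι : Type) (α : ι → K) (I : ι → Submodule O K),
      (∀ r : ι, ∃ (a : K) (J : Ideal O),
          (I r : Set K) = (fun x => a * x) '' (Subtype.val '' (J : Set O))) →
      (∀ r s : ι, ∃ x : K, x - α r ∈ I r ∧ x - α s ∈ I s) →
      ∃ x : K, ∀ r : ι, x - α r ∈ I r)
    (n : ℕ) (N : Submodule O (Fin (n + 1) → K))
    (a' : Fin n → Fin n → K) (hli : LinearIndependent K a')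
    (I' : Fin n → Submodule O K)
    (hIc : ∀ i, I' i = ⊤ ∨ ∃ (b : K) (J : Ideal O),
        (I' i : Set K) = (fun x => b * x) '' (Subtype.val '' (J : Set O)))
    (hN₀ : ∀ z : Fin n → K, Fin.snoc z 0 ∈ N ↔
        ∃ c : Fin n → K, (∀ i, c i ∈ I' i) ∧ z = ∑ i, c i • a' i) :
    ∃ v : Fin (n + 1) → K, v (Fin.last n) = 1 ∧
      ∀ c : K, (∃ w ∈ N, w (Fin.last n) = c) → c • v ∈ N := by
  classical
  -- the linearly independent family `a'` is a basis of `K^n`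
  let b : Module.Basis (Fin n) K (Fin n → K) :=
    Module.Basis.mk hli (hli.span_eq_top_of_card_eq_finrank' (by simp)).ge
  have hb : ∀ i, b i = a' i := fun i => by simp [b]
  -- membership characterization of `N ∩ (last coordinate = 0)`
  have hchar : ∀ z : Fin n → K, Fin.snoc z 0 ∈ N ↔ ∀ i, b.repr z i ∈ I' i := by
    intro z
    rw [hN₀]
    constructor
    · rintro ⟨c, hc, rfl⟩ i
      have h1 : (∑ j, c j • a' j) = ∑ j, c j • b j := by simp_rw [hb]
      rw [h1, b.repr_sum_self]
      exact hc i
    · intro h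
      refine ⟨fun i => b.repr z i, h, ?_⟩
      simp_rw [← hb]
      exact (b.sum_repr z).symm
  -- the index type: nonzero elements of the image of the last-coordinate projection
  let ι' := {c : K // (∃ w ∈ N, w (Fin.last n) = c) ∧ c ≠ 0}
  choose w hwN hwl using fun r : ι' => r.2.1
  have hr0 : ∀ r : ι', (r : K) ≠ 0 := fun r => r.2.2
  let β : ι' → Fin n → K := fun r => b.repr (Fin.init (w r))
  -- key computation from pairwise comparisons in the valuation ring
  have pair_key : ∀ r s : ι', ∀ h : (r : K) / (s : K) ∈ O, ∀ i,
      β r i - ((r : K) / (s : K)) * β s i ∈ I' i := by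
    intro r s h i
    have hy : w r - (⟨_, h⟩ : O) • w s ∈ N := N.sub_mem (hwN r) (N.smul_mem _ (hwN s))
    have hylast : (w r - (⟨_, h⟩ : O) • w s) (Fin.last n) = 0 := by
      simp only [Pi.sub_apply, osmul_pi_eq, Pi.smul_apply, smul_eq_mul, hwl]
      rw [div_mul_cancel₀ _ (hr0 s), sub_self]
    have hy2 : Fin.snoc (Fin.init (w r - (⟨_, h⟩ : O) • w s)) 0 ∈ N := by
      have hy3 := Fin.snoc_init_self (w r - (⟨_, h⟩ : O) • w s)
      rw [hylast] at hy3
      rw [hy3]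
      exact hy
    have := (hchar _).1 hy2 i
    rw [init_sub, osmul_pi_eq, init_smul, map_sub, map_smul] at this
    simpa [β] using this
  -- solve the congruence system coordinatewise
  have key : ∀ i, ∃ xi : K, ∀ r : ι', (r : K) * xi - β r i ∈ I' i := by
    intro i
    rcases hIc i with htop | ⟨bb, J0, hset⟩
    · exact ⟨0, fun r => by rw [htop]; trivial⟩
    · have hIm : ∀ x : K, x ∈ I' i ↔ ∃ t : O, t ∈ J0 ∧ x = bb * t := by
        intro x
        have := Set.ext_iff.1 hset x
        simpa [eq_comm] using this
      have hform : ∀ r : ι', ∃ (aa : K) (J : Ideal O),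
          (((I' i).comap (mulL (O := O) (r : K)) : Submodule O K) : Set K)
            = (fun x => aa * x) '' (Subtype.val '' (J : Set O)) := by
        intro r
        refine ⟨bb * (r : K)⁻¹, J0, ?_⟩
        ext x
        simp only [SetLike.mem_coe, Submodule.mem_comap, mulL_apply, Set.mem_image,
          exists_exists_and_eq_and]
        rw [hIm]
        constructor
        · rintro ⟨t, ht, hx⟩
          refine ⟨t, ht, ?_⟩
          have hxx : x = (r : K)⁻¹ * ((r : K) * x) := by
            rw [inv_mul_cancel_left₀ (hr0 r)]
          rw [hxx, hx]
          ring
        · rintro ⟨t, ht, rfl⟩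
          refine ⟨t, ht, ?_⟩
          rw [show (r : K) * (bb * (r : K)⁻¹ * ↑t) = (r : K) * (r : K)⁻¹ * (bb * ↑t) by ring,
            mul_inv_cancel₀ (hr0 r), one_mul]
      have hpair : ∀ r s : ι', ∃ x : K,
          x - (r : K)⁻¹ * β r i ∈ (I' i).comap (mulL (O := O) (r : K)) ∧
          x - (s : K)⁻¹ * β s i ∈ (I' i).comap (mulL (O := O) (s : K)) := by
        intro r s
        rcases O.mem_or_inv_mem ((r : K) / (s : K)) with h1 | h1
        · refine ⟨(s : K)⁻¹ * β s i, ?_, ?_⟩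
          · rw [Submodule.mem_comap, mulL_apply]
            have h2 : (r : K) * ((s : K)⁻¹ * β s i - (r : K)⁻¹ * β r i)
                = -(β r i - ((r : K) / (s : K)) * β s i) := by
              field_simp [hr0 r, hr0 s]
              ring
            rw [h2]
            exact (I' i).neg_mem (pair_key r s h1 i)
          · rw [Submodule.mem_comap, mulL_apply, sub_self, mul_zero]
            exact (I' i).zero_mem
        · rw [inv_div] at h1
          refine ⟨(r : K)⁻¹ * β r i, ?_, ?_⟩
          · rw [Submodule.mem_comap, mulL_apply, sub_self, mul_zero]
            exact (I' i).zero_mem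
          · rw [Submodule.mem_comap, mulL_apply]
            have h2 : (s : K) * ((r : K)⁻¹ * β r i - (s : K)⁻¹ * β s i)
                = -(β s i - ((s : K) / (r : K)) * β r i) := by
              field_simp [hr0 r, hr0 s]
              ring
            rw [h2]
            exact (I' i).neg_mem (pair_key s r h1 i)
      obtain ⟨xi, hxi⟩ := hmax ι' (fun r => (r : K)⁻¹ * β r i)
        (fun r => (I' i).comap (mulL (O := O) (r : K))) hform hpair
      refine ⟨xi, fun r => ?_⟩
      have := hxi r
      rw [Submodule.mem_comap] at this
      have h2 : (r : K) * (xi - (r : K)⁻¹ * β r i) = (r : K) * xi - β r i := by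
        rw [mul_sub, mul_inv_cancel_left₀ (hr0 r)]
      rw [mulL_apply, h2] at this
      exact this
  choose x hx using key
  refine ⟨Fin.snoc (∑ i, x i • b i) 1, Fin.snoc_last _ _, ?_⟩
  intro c hc
  rcases eq_or_ne c 0 with rfl | hc0
  · rw [zero_smul]; exact N.zero_mem
  · set r : ι' := ⟨c, hc, hc0⟩ with hrdef
    have hcr : (r : K) = c := rfl
    set v : Fin (n + 1) → K := Fin.snoc (∑ i, x i • b i) 1 with hv
    have hylast : (c • v - w r) (Fin.last n) = 0 := by
      simp only [Pi.sub_apply, Pi.smul_apply, smul_eq_mul, hv, Fin.snoc_last, hwl r, hcr,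
        mul_one, sub_self]
    have hymem : Fin.snoc (Fin.init (c • v - w r)) 0 ∈ N := by
      rw [hchar]
      intro i
      have h1 : Fin.init (c • v - w r) = c • (∑ i, x i • b i) - Fin.init (w r) := by
        rw [init_sub, init_smul, hv, Fin.init_snoc]
      rw [h1, map_sub, map_smul]
      have h2 : b.repr (∑ i, x i • b i) i = x i := by rw [b.repr_sum_self]
      simp only [Finsupp.coe_sub, Finsupp.coe_smul, Pi.sub_apply, Pi.smul_apply, smul_eq_mul, h2]
      have := hx i r
      rwa [hcr] at this
    have : c • v - w r ∈ N := by
      have hy3 := Fin.snoc_init_self (c • v - w r)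
      rw [hylast] at hy3
      rw [← hy3]
      exact hymem
    have := N.add_mem this (hwN r)
    rwa [sub_add_cancel] at this

lemma li_of_triangular {n : ℕ} (a : Fin n → Fin n → K)
    (htri : ∀ i j : Fin n, (j : ℕ) < (i : ℕ) → a j i = 0)
    (hdiag : ∀ i, a i i ≠ 0) : LinearIndependent K a := by
  let A : Matrix (Fin n) (Fin n) K := Matrix.of fun i j => a j i
  have hA : A.BlockTriangular id := fun i j hij => htri i j hij
  have hdet : A.det ≠ 0 := by
    rw [Matrix.det_of_upperTriangular hA]
    exact Finset.prod_ne_zero_iff.2 fun i _ => hdiag i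
  have h1 : LinearIndependent K fun j => A.transpose j :=
    Matrix.linearIndependent_cols_iff_isUnit.2
      ((Matrix.isUnit_iff_isUnit_det A).2 (isUnit_iff_ne_zero.2 hdet))
  have h2 : (fun j => A.transpose j) = a := by funext j i; rfl
  rwa [h2] at h1

lemma snoc_sum_smul {n : ℕ} (c : Fin n → K) (f : Fin n → Fin n → K) :
    (Fin.snoc (∑ i, c i • f i) 0 : Fin (n + 1) → K)
      = ∑ i, c i • (Fin.snoc (f i) 0 : Fin (n + 1) → K) := by
  have h := map_sum (snocL (K := K) n) (fun i => c i • f i) Finset.univ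
  simp only [map_smul, snocL_apply] at h
  exact h

lemma main (hmax : ∀ (ι : Type) (α : ι → K) (I : ι → Submodule O K),
      (∀ r : ι, ∃ (a : K) (J : Ideal O),
          (I r : Set K) = (fun x => a * x) '' (Subtype.val '' (J : Set O))) →
      (∀ r s : ι, ∃ x : K, x - α r ∈ I r ∧ x - α s ∈ I s) →
      ∃ x : K, ∀ r : ι, x - α r ∈ I r) :
    ∀ (n : ℕ) (N : Submodule O (Fin n → K)),
    ∃ (a : Fin n → Fin n → K) (I : Fin n → Submodule O K),
      (∀ i j : Fin n, (j : ℕ) < (i : ℕ) → a j i = 0) ∧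
      (∀ i : Fin n, a i i ≠ 0) ∧
      (∀ i : Fin n, I i = ⊤ ∨ ∃ (b : K) (J : Ideal O),
          (I i : Set K) = (fun x => b * x) '' (Subtype.val '' (J : Set O))) ∧
      (N : Set (Fin n → K)) =
        {x | ∃ c : Fin n → K, (∀ i : Fin n, c i ∈ I i) ∧ x = ∑ i : Fin n, c i • a i} := by
  intro n
  induction n with
  | zero =>
    intro N
    refine ⟨Fin.elim0, Fin.elim0, fun i => i.elim0, fun i => i.elim0, fun i => i.elim0, ?_⟩
    ext x
    have hx : x = 0 := funext fun i => i.elim0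
    subst hx
    simp only [Set.mem_setOf_eq, SetLike.mem_coe]
    constructor
    · intro _
      exact ⟨0, fun i => i.elim0, by simp⟩
    · intro _
      exact N.zero_mem
  | succ n IH =>
    intro N
    -- the submodule of `K^n` corresponding to elements of `N` with last coordinate `0`
    have hsnoc_add : ∀ y z : Fin n → K,
        (Fin.snoc y 0 : Fin (n + 1) → K) + (Fin.snoc z 0 : Fin (n + 1) → K)
          = Fin.snoc (y + z) (0 : K) := by
      intro y z; funext i
      refine Fin.lastCases ?_ (fun i => ?_) i <;> simp
    have hsnoc_smul : ∀ (r : O) (z : Fin n → K),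
        r • (Fin.snoc z 0 : Fin (n + 1) → K) = Fin.snoc (r • z) (0 : K) := by
      intro r z; funext i
      refine Fin.lastCases ?_ (fun i => ?_) i <;> simp
    have hsnoc_zero : (Fin.snoc (0 : Fin n → K) 0 : Fin (n + 1) → K) = 0 := by
      funext i
      refine Fin.lastCases ?_ (fun i => ?_) i <;> simp
    let N₀ : Submodule O (Fin n → K) :=
      { carrier := {z | Fin.snoc z 0 ∈ N}
        add_mem' := fun {y z} hy hz => by
          have := N.add_mem hy hz
          rwa [Set.mem_setOf_eq, ← hsnoc_add]
        zero_mem' := by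
          rw [Set.mem_setOf_eq, hsnoc_zero]
          exact N.zero_mem
        smul_mem' := fun r z hz => by
          have := N.smul_mem r hz
          rwa [Set.mem_setOf_eq, ← hsnoc_smul] }
    obtain ⟨a', I', htri', hdiag', hIc', hset'⟩ := IH N₀
    have hli' : LinearIndependent K a' := li_of_triangular a' htri' hdiag'
    have hN₀iff : ∀ z : Fin n → K, Fin.snoc z 0 ∈ N ↔
        ∃ c : Fin n → K, (∀ i, c i ∈ I' i) ∧ z = ∑ i, c i • a' i := by
      intro z
      have := Set.ext_iff.1 hset' z
      exact (show z ∈ N₀ ↔ _ by simpa using this)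
    obtain ⟨v, hv1, hv2⟩ := exists_splitting hmax n N a' hli' I' hIc' hN₀iff
    refine ⟨Fin.snoc (fun j => Fin.snoc (a' j) 0) v,
      Fin.snoc I' (N.map (LinearMap.proj (R := O) (Fin.last n))), ?_, ?_, ?_, ?_⟩
    · -- triangularity
      intro i j
      refine Fin.lastCases ?_ (fun j' => ?_) j
      · intro hij
        have := i.is_lt
        simp only [Fin.val_last] at hij
        omega
      · refine Fin.lastCases ?_ (fun i' => ?_) i
        · intro _
          rw [Fin.snoc_castSucc]
          exact Fin.snoc_last _ _
        · intro hij
          rw [Fin.snoc_castSucc, Fin.snoc_castSucc]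
          exact htri' i' j' (by simpa using hij)
    · -- nonzero diagonal
      intro i
      refine Fin.lastCases ?_ (fun i' => ?_) i
      · rw [Fin.snoc_last, hv1]
        exact one_ne_zero
      · rw [Fin.snoc_castSucc, Fin.snoc_castSucc]
        exact hdiag' i'
    · -- each I is ⊤ or a fractional ideal
      intro i
      refine Fin.lastCases ?_ (fun i' => ?_) i
      · rw [Fin.snoc_last]
        exact submodule_cases _
      · rw [Fin.snoc_castSucc]
        exact hIc' i'
    · -- the set equality
      ext x
      simp only [SetLike.mem_coe, Set.mem_setOf_eq]
      constructor
      · intro hx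
        have hcl : x (Fin.last n) ∈ N.map (LinearMap.proj (R := O) (Fin.last n)) :=
          Submodule.mem_map.2 ⟨x, hx, rfl⟩
        have hcv : x (Fin.last n) • v ∈ N := hv2 _ ⟨x, hx, rfl⟩
        have hy : x - x (Fin.last n) • v ∈ N := N.sub_mem hx hcv
        have hylast : (x - x (Fin.last n) • v) (Fin.last n) = 0 := by
          simp [hv1]
        have hy3 := Fin.snoc_init_self (x - x (Fin.last n) • v)
        rw [hylast] at hy3
        have hy4 : Fin.snoc (Fin.init (x - x (Fin.last n) • v)) 0 ∈ N := by
          rw [hy3]; exact hy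
        obtain ⟨c', hc', hsum⟩ := (hN₀iff _).1 hy4
        refine ⟨Fin.snoc c' (x (Fin.last n)), ?_, ?_⟩
        · intro i
          refine Fin.lastCases ?_ (fun i' => ?_) i
          · rw [Fin.snoc_last, Fin.snoc_last]
            exact hcl
          · rw [Fin.snoc_castSucc, Fin.snoc_castSucc]
            exact hc' i'
        · rw [Fin.sum_univ_castSucc]
          simp only [Fin.snoc_castSucc, Fin.snoc_last]
          rw [← snoc_sum_smul, ← hsum, hy3]
          abel
      · rintro ⟨c, hcI, rfl⟩
        rw [Fin.sum_univ_castSucc]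
        simp only [Fin.snoc_castSucc, Fin.snoc_last]
        refine N.add_mem ?_ ?_
        · rw [← snoc_sum_smul]
          exact (hN₀iff _).2 ⟨fun i => c i.castSucc, fun i => by
            have := hcI i.castSucc
            rwa [Fin.snoc_castSucc] at this, rfl⟩
        · have hcl := hcI (Fin.last n)
          rw [Fin.snoc_last] at hcl
          obtain ⟨w, hw, hwl⟩ := Submodule.mem_map.1 hcl
          exact hv2 _ ⟨w, hw, hwl⟩

end UTB


/-- Let `K` be a maximal (spherically complete) valued field with valuation ring `O`:
every pairwise-consistent family of congruences `x − αᵣ ∈ Iᵣ` by fractional or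
integral ideals `Iᵣ` of `O` has a simultaneous solution.  Then every `O`-submodule
`N` of `K^n` admits an upper triangular basis: there are `a₁, …, aₙ ∈ K^n` forming
an upper triangular invertible matrix and `O`-submodules `I₁, …, Iₙ` of `K`, each
equal to `K` or to a (fractional or integral) ideal of `O` (in particular possibly
`O` itself), such that `N = {a₁x₁ + ⋯ + aₙxₙ : xᵢ ∈ Iᵢ}`.  In particular `N` is
isomorphic as an `O`-module to the direct sum `⊕ᵢ Iᵢ`. -/
theorem maximal_field_submodule_upper_triangular_basis
    (K : Type) [Field K] (O : ValuationSubring K)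
    (hmax : ∀ (ι : Type) (α : ι → K) (I : ι → Submodule O K),
      (∀ r : ι, ∃ (a : K) (J : Ideal O),
          (I r : Set K) = (fun x => a * x) '' (Subtype.val '' (J : Set O))) →
      (∀ r s : ι, ∃ x : K, x - α r ∈ I r ∧ x - α s ∈ I s) →
      ∃ x : K, ∀ r : ι, x - α r ∈ I r)
    (n : ℕ) (N : Submodule O (Fin n → K)) :
    ∃ (a : Fin n → Fin n → K) (I : Fin n → Submodule O K),
      -- the matrix with columns `a j` is upper triangular and invertible
      (∀ i j : Fin n, (j : ℕ) < (i : ℕ) → a j i = 0) ∧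
      (∀ i : Fin n, a i i ≠ 0) ∧
      LinearIndependent K a ∧
      -- each `Iᵢ` is `K`, `O`, or a fractional/integral ideal of `O`
      (∀ i : Fin n, I i = ⊤ ∨ ∃ (b : K) (J : Ideal O),
          (I i : Set K) = (fun x => b * x) '' (Subtype.val '' (J : Set O))) ∧
      (N : Set (Fin n → K)) =
        {x | ∃ c : Fin n → K, (∀ i : Fin n, c i ∈ I i) ∧ x = ∑ i : Fin n, c i • a i} ∧
      Nonempty (N ≃ₗ[O] ((i : Fin n) → I i)) := by
  classical
  obtain ⟨a, I, htri, hdiag, hIc, hseteq⟩ := UTB.main hmax n N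
  have hli : LinearIndependent K a := UTB.li_of_triangular a htri hdiag
  refine ⟨a, I, htri, hdiag, hli, hIc, hseteq, ?_⟩
  have hmem : ∀ x : Fin n → K, x ∈ N ↔
      ∃ c : Fin n → K, (∀ i, c i ∈ I i) ∧ x = ∑ i, c i • a i := by
    intro x
    have := Set.ext_iff.1 hseteq x
    simpa using this
  have hsmul : ∀ (r : O) (z : Fin n → K), r • z = (r : K) • z := fun r z => rfl
  let f : ((i : Fin n) → I i) →ₗ[O] N :=
    { toFun := fun c => ⟨∑ i, (c i : K) • a i,
        (hmem _).2 ⟨fun i => (c i : K), fun i => (c i).2, rfl⟩⟩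
      map_add' := fun c d => by
        apply Subtype.ext
        show (∑ i, (((c + d) i : K)) • a i)
            = (∑ i, ((c i : K)) • a i) + ∑ i, ((d i : K)) • a i
        rw [← Finset.sum_add_distrib]
        refine Finset.sum_congr rfl fun i _ => ?_
        rw [← add_smul]
        rfl
      map_smul' := fun r c => by
        apply Subtype.ext
        show (∑ i, (((r • c) i : K)) • a i) = r • (∑ i, ((c i : K)) • a i)
        rw [hsmul, Finset.smul_sum]
        refine Finset.sum_congr rfl fun i _ => ?_
        rw [← smul_assoc]
        rfl }
  have hinj : Function.Injective f := by
    intro c d h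
    have h2 : (∑ i, (c i : K) • a i) = ∑ i, (d i : K) • a i := Subtype.ext_iff.1 h
    have h3 : ∑ i, ((c i : K) - (d i : K)) • a i = 0 := by
      simp only [sub_smul, Finset.sum_sub_distrib, h2, sub_self]
    have h4 := Fintype.linearIndependent_iff.1 hli (fun i => (c i : K) - (d i : K)) h3
    funext i
    exact Subtype.ext (sub_eq_zero.1 (h4 i))
  have hsurj : Function.Surjective f := by
    rintro ⟨x, hx⟩
    obtain ⟨c, hc, rfl⟩ := (hmem x).1 hx
    exact ⟨fun i => ⟨c i, hc i⟩, rfl⟩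
  exact ⟨(LinearEquiv.ofBijective f ⟨hinj, hsurj⟩).symm⟩
end

section
/- Let K be a maximal (spherically complete) valued field with valuation ring O, and let M, N ⊆ K be O-submodules. For any O-module homomorphism h : M → K/N there exists a ∈ K such that h(x) = ax + N for all x ∈ M. -/
/-- Let `K` be a maximal (spherically complete) valued field with valuation ring `O`
(every pairwise-consistent family of congruences `x − αᵣ ∈ Iᵣ` by fractional or
integral ideals has a simultaneous solution), and let `M`, `N` be `O`-submodules of
`K`.  For any `O`-module homomorphism `h : M → K/N` there exists `a ∈ K` such that
`h(x) = a·x + N` for all `x ∈ M`. -/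
theorem hom_to_quotient_is_linear
    (K : Type) [Field K] (O : ValuationSubring K)
    (hmax : ∀ (ι : Type) (α : ι → K) (I : ι → Submodule O K),
      (∀ r : ι, ∃ (a : K) (J : Ideal O),
          (I r : Set K) = (fun x => a * x) '' (Subtype.val '' (J : Set O))) →
      (∀ r s : ι, ∃ x : K, x - α r ∈ I r ∧ x - α s ∈ I s) →
      ∃ x : K, ∀ r : ι, x - α r ∈ I r)
    (M N : Submodule O K) (h : M →ₗ[O] (K ⧸ N)) :
    ∃ a : K, ∀ x : M, h x = Submodule.Quotient.mk (a * (x : K)) := by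
  by_cases hN : N = ⊤
  · subst hN
    have : Subsingleton (K ⧸ (⊤ : Submodule O K)) :=
      Submodule.Quotient.subsingleton_iff.2 rfl
    exact ⟨0, fun x => Subsingleton.elim _ _⟩
  obtain ⟨z, hz⟩ : ∃ z, z ∉ N := by
    by_contra hcon
    push_neg at hcon
    exact hN (Submodule.eq_top_iff'.2 hcon)
  have hz0 : z ≠ 0 := fun h0 => hz (h0 ▸ N.zero_mem)
  -- choose lifts of h
  have hc : ∀ x : M, ∃ y : K, Submodule.Quotient.mk y = h x :=
    fun x => Submodule.Quotient.mk_surjective N (h x)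
  choose c hcspec using hc
  -- multiplication-by-t as an O-linear map on K
  let mulmap : K → K →ₗ[O] K := fun t =>
    { toFun := fun w => t * w
      map_add' := fun a b => mul_add t a b
      map_smul' := fun o w => by
        simp only [RingHom.id_apply, Algebra.smul_def]
        ring }
  let ι : Type := {x : K // x ∈ M ∧ x ≠ 0}
  let α : ι → K := fun r => c ⟨r.1, r.2.1⟩ / r.1
  let I : ι → Submodule O K := fun r => N.comap (mulmap r.1)
  have hmemI : ∀ (r : ι) (w : K), w ∈ I r ↔ r.1 * w ∈ N := fun r w => Iff.rfl
  -- the ideal J with N = z • J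
  let J : Ideal O := (N.comap (mulmap z)).comap (Algebra.linearMap O K)
  have hmemJ : ∀ o : O, o ∈ J ↔ z * (o : K) ∈ N := fun o => Iff.rfl
  have hNz : (N : Set K) = (fun t => z * t) '' (Subtype.val '' (J : Set O)) := by
    ext n
    simp only [Set.mem_image, SetLike.mem_coe, exists_exists_and_eq_and]
    constructor
    · intro hn
      by_cases hn0 : n = 0
      · exact ⟨0, by simpa [hmemJ] using N.zero_mem, by simp [hn0]⟩
      · rcases O.mem_or_inv_mem (n / z) with ht | ht
        · refine ⟨⟨n / z, ht⟩, ?_, ?_⟩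
          · rw [hmemJ]
            simpa [mul_div_assoc', mul_div_cancel_left₀ n hz0] using hn
          · simp [mul_div_assoc', mul_div_cancel_left₀ n hz0]
        · exfalso
          rw [show (n / z)⁻¹ = z / n by field_simp] at ht
          have : (⟨z / n, ht⟩ : O) • n ∈ N := N.smul_mem _ hn
          rw [Algebra.smul_def] at this
          apply hz
          simpa [div_mul_cancel₀ z hn0] using this
    · rintro ⟨o, ho, rfl⟩
      exact (hmemJ o).1 ho
  -- each I r has the required shape
  have hshape : ∀ r : ι, ∃ (a : K) (J' : Ideal O),
      (I r : Set K) = (fun x => a * x) '' (Subtype.val '' (J' : Set O)) := by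
    intro r
    refine ⟨r.1⁻¹ * z, J, ?_⟩
    have h1 : (I r : Set K) = (fun w => r.1⁻¹ * w) '' (N : Set K) := by
      ext w
      simp only [Set.mem_image, SetLike.mem_coe, hmemI]
      constructor
      · intro hw
        exact ⟨r.1 * w, hw, by rw [← mul_assoc, inv_mul_cancel₀ r.2.2, one_mul]⟩
      · rintro ⟨n, hn, rfl⟩
        rwa [← mul_assoc, mul_inv_cancel₀ r.2.2, one_mul]
    rw [h1, hNz, Set.image_image]
    congr 1
    ext t
    ring
  -- key compatibility lemma
  have key : ∀ (x y : K) (hx : x ∈ M) (hy : y ∈ M), x ≠ 0 → y ≠ 0 →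
      x / y ∈ O → x * (c ⟨y, hy⟩ / y) - c ⟨x, hx⟩ ∈ N := by
    intro x y hx hy hx0 hy0 ho
    have hxy : (⟨x, hx⟩ : M) = (⟨x / y, ho⟩ : O) • (⟨y, hy⟩ : M) := by
      apply Subtype.ext
      show x = (⟨x / y, ho⟩ : O) • y
      rw [Algebra.smul_def]
      show x = (x / y) * y
      exact (div_mul_cancel₀ x hy0).symm
    have h2 : h ⟨x, hx⟩ = (⟨x / y, ho⟩ : O) • h ⟨y, hy⟩ := by
      rw [hxy, map_smul]
    have h3 : (Submodule.Quotient.mk (c ⟨x, hx⟩) : K ⧸ N) =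
        Submodule.Quotient.mk ((⟨x / y, ho⟩ : O) • c ⟨y, hy⟩) := by
      rw [hcspec, Submodule.Quotient.mk_smul, hcspec, h2]
    have h4 : c ⟨x, hx⟩ - (⟨x / y, ho⟩ : O) • c ⟨y, hy⟩ ∈ N :=
      (Submodule.Quotient.eq N).1 h3
    rw [Algebra.smul_def] at h4
    have h5 : x * (c ⟨y, hy⟩ / y) = (x / y) * c ⟨y, hy⟩ := by
      rw [mul_div_assoc', mul_div_right_comm]
    rw [h5]
    have := N.neg_mem h4
    simpa [neg_sub] using this
  -- pairwise consistency
  have hpair : ∀ r s : ι, ∃ x : K, x - α r ∈ I r ∧ x - α s ∈ I s := by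
    intro r s
    rcases O.mem_or_inv_mem (r.1 / s.1) with ho | ho
    · refine ⟨c ⟨s.1, s.2.1⟩ / s.1, ?_, ?_⟩
      · rw [hmemI]
        have h6 : r.1 * (c ⟨s.1, s.2.1⟩ / s.1 - α r)
            = r.1 * (c ⟨s.1, s.2.1⟩ / s.1) - c ⟨r.1, r.2.1⟩ := by
          show r.1 * (c ⟨s.1, s.2.1⟩ / s.1 - c ⟨r.1, r.2.1⟩ / r.1) = _
          rw [mul_sub, mul_div_assoc', mul_div_assoc', mul_div_cancel_left₀ _ r.2.2]
        rw [h6]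
        exact key r.1 s.1 r.2.1 s.2.1 r.2.2 s.2.2 ho
      · show s.1 * (c ⟨s.1, s.2.1⟩ / s.1 - α s) ∈ N
        show s.1 * (c ⟨s.1, s.2.1⟩ / s.1 - c ⟨s.1, s.2.1⟩ / s.1) ∈ N
        simpa using N.zero_mem
    · rw [show (r.1 / s.1)⁻¹ = s.1 / r.1 by field_simp] at ho
      refine ⟨c ⟨r.1, r.2.1⟩ / r.1, ?_, ?_⟩
      · show r.1 * (c ⟨r.1, r.2.1⟩ / r.1 - c ⟨r.1, r.2.1⟩ / r.1) ∈ N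
        simpa using N.zero_mem
      · rw [hmemI]
        have h6 : s.1 * (c ⟨r.1, r.2.1⟩ / r.1 - α s)
            = s.1 * (c ⟨r.1, r.2.1⟩ / r.1) - c ⟨s.1, s.2.1⟩ := by
          show s.1 * (c ⟨r.1, r.2.1⟩ / r.1 - c ⟨s.1, s.2.1⟩ / s.1) = _
          rw [mul_sub, mul_div_assoc', mul_div_assoc', mul_div_cancel_left₀ _ s.2.2]
        rw [h6]
        exact key s.1 r.1 s.2.1 r.2.1 s.2.2 r.2.2 ho
  obtain ⟨a, ha⟩ := hmax ι α I hshape hpair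
  refine ⟨a, fun x => ?_⟩
  by_cases hx0 : (x : K) = 0
  · have hx : x = 0 := Subtype.ext hx0
    rw [hx]
    simp
  · have har := ha ⟨x.1, x.2, hx0⟩
    rw [hmemI] at har
    have h7 : x.1 * (a - α ⟨x.1, x.2, hx0⟩) = a * x.1 - c ⟨x.1, x.2⟩ := by
      show x.1 * (a - c ⟨x.1, x.2⟩ / x.1) = _
      rw [mul_sub, mul_div_assoc', mul_div_cancel_left₀ _ hx0, mul_comm]
    rw [h7] at har
    have h8 : Submodule.Quotient.mk (a * x.1) = Submodule.Quotient.mk (c ⟨x.1, x.2⟩) :=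
      (Submodule.Quotient.eq N).2 har
    rw [← hcspec x]
    exact h8.symm
end

section
/- Let V be a finite-dimensional valued vector space over a valued field K with value group Γ. Then the action of Γ on the value set Γ(V) has at most dim_K(V) orbits. -/
/-- Let `V` be a finite-dimensional valued vector space over a valued field `K` with
(additive) value group `Γ`: `Γ(V)` is a linear order on which `Γ` acts order
preservingly, and `val : V∖{0} → Γ(V)` satisfies the ultrametric inequality and
`val (α • x) = v(α) + val x`, with `Γ(V) = val(V∖{0})`.  Then the action of `Γ` on
`Γ(V)` has at most `dim_K V` orbits. -/
theorem valued_vector_space_orbits_le_dim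
    (K : Type*) [Field K] (Γ : Type*) [AddCommGroup Γ] [LinearOrder Γ] [IsOrderedAddMonoid Γ]
    (vK : K → Γ) (hvK : ∀ x y : K, x ≠ 0 → y ≠ 0 → vK (x * y) = vK x + vK y)
    (V : Type*) [AddCommGroup V] [Module K V] [FiniteDimensional K V]
    (ΓV : Type*) [LinearOrder ΓV]
    (act : Γ → ΓV → ΓV)
    (hact_zero : ∀ γ : ΓV, act 0 γ = γ)
    (hact_add : ∀ (g h : Γ) (γ : ΓV), act (g + h) γ = act g (act h γ))
    (hact_mono₁ : ∀ g : Γ, Monotone (act g))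
    (hact_mono₂ : ∀ γ : ΓV, Monotone (fun g : Γ => act g γ))
    (val : V → ΓV)
    (hval_ultra : ∀ x y : V, x ≠ 0 → y ≠ 0 → x + y ≠ 0 →
        min (val x) (val y) ≤ val (x + y))
    (hval_smul : ∀ (α : K) (x : V), α ≠ 0 → x ≠ 0 →
        val (α • x) = act (vK α) (val x))
    (hval_surj : ∀ γ : ΓV, ∃ x : V, x ≠ 0 ∧ val x = γ) :
    ∃ s : Finset ΓV, s.card ≤ Module.finrank K V ∧
      ∀ γ : ΓV, ∃ x ∈ s, ∃ g : Γ, act g x = γ := by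
  classical
  have hv1 : vK (1 : K) = 0 := by
    have h1 := hvK 1 1 one_ne_zero one_ne_zero
    rw [mul_one] at h1
    exact (left_eq_add.mp h1)
  have hvm1 : vK (-1 : K) = 0 := by
    have h2 := hvK (-1) (-1) (by norm_num) (by norm_num)
    rw [neg_mul_neg, one_mul, hv1] at h2
    rcases lt_trichotomy (vK (-1 : K)) 0 with h | h | h
    · have h3 := add_lt_add h h; rw [← h2, add_zero] at h3; exact absurd h3 (lt_irrefl 0)
    · exact h
    · have h3 := add_lt_add h h; rw [← h2, add_zero] at h3; exact absurd h3 (lt_irrefl 0)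
  have hval_neg : ∀ y : V, y ≠ 0 → val (-y) = val y := by
    intro y hy
    have h : (-y : V) = (-1 : K) • y := by simp
    rw [h, hval_smul (-1) y (by norm_num) hy, hvm1, hact_zero]
  have key_lt : ∀ x y : V, x ≠ 0 → y ≠ 0 → val x < val y →
      x + y ≠ 0 ∧ val (x + y) = val x := by
    intro x y hx hy hlt
    have hne : x + y ≠ 0 := by
      intro h
      have hxy : x = -y := by linear_combination (norm := abel_nf) h
      rw [hxy, hval_neg y hy] at hlt
      exact lt_irrefl _ hlt
    refine ⟨hne, le_antisymm ?_ ?_⟩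
    · by_contra h
      push_neg at h
      have hx' : x = (x + y) + (-y) := by abel
      have h2 := hval_ultra (x + y) (-y) hne (neg_ne_zero.mpr hy) (by rw [← hx']; exact hx)
      rw [hval_neg y hy, ← hx'] at h2
      have h3 : val x < min (val (x + y)) (val y) := lt_min h hlt
      exact absurd (lt_of_lt_of_le h3 h2) (lt_irrefl _)
    · have h4 := hval_ultra x y hx hy hne
      rwa [min_eq_left hlt.le] at h4
  have key : ∀ x y : V, x ≠ 0 → y ≠ 0 → val x ≠ val y →
      x + y ≠ 0 ∧ val (x + y) = min (val x) (val y) := by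
    intro x y hx hy hne
    rcases hne.lt_or_gt with h | h
    · have h1 := key_lt x y hx hy h
      exact ⟨h1.1, by rw [h1.2, min_eq_left h.le]⟩
    · have h1 := key_lt y x hy hx h
      rw [add_comm] at h1
      exact ⟨h1.1, by rw [h1.2, min_eq_right h.le]⟩
  -- sum lemma, indexed by ΓV
  have sum_lemma : ∀ (s : Finset ΓV) (y : ΓV → V), s.Nonempty → (∀ i ∈ s, y i ≠ 0) →
      (∀ i ∈ s, ∀ j ∈ s, i ≠ j → val (y i) ≠ val (y j)) →
      (∑ i ∈ s, y i) ≠ 0 ∧ ∃ i ∈ s, val (∑ j ∈ s, y j) = val (y i) := by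
    intro s
    induction s using Finset.induction with
    | empty => intro y h; exact absurd h (by simp)
    | @insert a s ha ih =>
      intro y _ hnz hdist
      by_cases hs : s.Nonempty
      · obtain ⟨hsne, i, hi, hvi⟩ := ih y hs
          (fun i hi => hnz i (Finset.mem_insert_of_mem hi))
          (fun i hi j hj => hdist i (Finset.mem_insert_of_mem hi) j (Finset.mem_insert_of_mem hj))
        have hai : a ≠ i := fun h => ha (h ▸ hi)
        have haz : y a ≠ 0 := hnz a (Finset.mem_insert_self a s)
        have hvne : val (y a) ≠ val (∑ j ∈ s, y j) := by
          rw [hvi]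
          exact hdist a (Finset.mem_insert_self a s) i (Finset.mem_insert_of_mem hi) hai
        obtain ⟨h1, h2⟩ := key (y a) (∑ j ∈ s, y j) haz hsne hvne
        rw [Finset.sum_insert ha]
        refine ⟨h1, ?_⟩
        rcases min_cases (val (y a)) (val (∑ j ∈ s, y j)) with ⟨hm, _⟩ | ⟨hm, _⟩
        · exact ⟨a, Finset.mem_insert_self a s, by rw [h2, hm]⟩
        · exact ⟨i, Finset.mem_insert_of_mem hi, by rw [h2, hm, hvi]⟩
      · rw [Finset.not_nonempty_iff_eq_empty] at hs
        subst hs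
        simp only [Finset.sum_insert (Finset.notMem_empty a), Finset.sum_empty, add_zero]
        exact ⟨hnz a (Finset.mem_insert_self a ∅), a, Finset.mem_insert_self a ∅, rfl⟩
  -- orbit relation
  set R : ΓV → ΓV → Prop := fun γ δ => ∃ g : Γ, act g δ = γ with hR
  have hRrefl : ∀ γ, R γ γ := fun γ => ⟨0, hact_zero γ⟩
  have hRsymm : ∀ γ δ, R γ δ → R δ γ := by
    rintro γ δ ⟨g, hg⟩
    exact ⟨-g, by rw [← hg, ← hact_add, neg_add_cancel, hact_zero]⟩
  choose rep hrep_ne hrep_val using hval_surj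
  -- card bound for pairwise-inequivalent finsets
  have card_bound : ∀ t : Finset ΓV,
      (∀ γ ∈ t, ∀ δ ∈ t, γ ≠ δ → ¬ R γ δ) → t.card ≤ Module.finrank K V := by
    intro t hpair
    have hLI : LinearIndependent K (fun γ : t => rep γ) := by
      rw [linearIndependent_iff']
      intro s g hsum i hi
      by_contra hgi
      -- reindex over ΓV
      set u : Finset ΓV := (s.filter (fun j => g j ≠ 0)).image Subtype.val with hu
      set c : ΓV → K := fun γ => if h : γ ∈ t then g ⟨γ, h⟩ else 0 with hc
      set y : ΓV → V := fun γ => c γ • rep γ with hy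
      have hcmem : ∀ j : t, c (j : ΓV) = g j := by
        intro j; rw [hc]; simp only [j.2, dif_pos]
      have hune : u.Nonempty :=
        ⟨i, Finset.mem_image.mpr ⟨i, Finset.mem_filter.mpr ⟨hi, hgi⟩, rfl⟩⟩
      have humem : ∀ γ ∈ u, ∃ h : γ ∈ t, g ⟨γ, h⟩ ≠ 0 := by
        intro γ hγ
        obtain ⟨j, hj, rfl⟩ := Finset.mem_image.mp hγ
        exact ⟨j.2, by simpa using (Finset.mem_filter.mp hj).2⟩
      have hcne : ∀ γ ∈ u, c γ ≠ 0 := by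
        intro γ hγ
        obtain ⟨h, hne⟩ := humem γ hγ
        rw [hc]; simpa [h] using hne
      have hnz : ∀ γ ∈ u, y γ ≠ 0 :=
        fun γ hγ => smul_ne_zero (hcne γ hγ) (hrep_ne γ)
      have hvy : ∀ γ ∈ u, val (y γ) = act (vK (c γ)) γ := by
        intro γ hγ
        rw [hy]
        simp only
        rw [hval_smul _ _ (hcne γ hγ) (hrep_ne γ), hrep_val]
      have hdist : ∀ γ ∈ u, ∀ δ ∈ u, γ ≠ δ → val (y γ) ≠ val (y δ) := by
        intro γ hγ δ hδ hne heq
        rw [hvy γ hγ, hvy δ hδ] at heq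
        have hRγδ : R γ δ := by
          refine ⟨-(vK (c γ)) + vK (c δ), ?_⟩
          rw [hact_add, ← heq, ← hact_add, neg_add_cancel, hact_zero]
        obtain ⟨hγt, _⟩ := humem γ hγ
        obtain ⟨hδt, _⟩ := humem δ hδ
        exact hpair γ hγt δ hδt hne hRγδ
      have hsum0 : ∑ γ ∈ u, y γ = 0 := by
        rw [hu, Finset.sum_image (by intro a _ b _ h; exact Subtype.ext h)]
        have : ∑ j ∈ s.filter (fun j => g j ≠ 0), y (j : ΓV)
            = ∑ j ∈ s.filter (fun j => g j ≠ 0), g j • rep (j : ΓV) := by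
          refine Finset.sum_congr rfl fun j _ => ?_
          rw [hy]; simp only; rw [hcmem j]
        rw [this, Finset.sum_filter_of_ne (by intro j _ h hgj; exact h (by rw [hgj, zero_smul]))]
        exact hsum
      exact (sum_lemma u y hune hnz hdist).1 hsum0
    have h := hLI.fintype_card_le_finrank
    rwa [Fintype.card_coe] at h
  -- maximal pairwise-inequivalent finset
  set n := Module.finrank K V with hn
  set Q : ℕ → Prop := fun k => ∃ t : Finset ΓV,
      (∀ γ ∈ t, ∀ δ ∈ t, γ ≠ δ → ¬ R γ δ) ∧ t.card = k with hQ
  have hQ0 : Q 0 := ⟨∅, by simp, rfl⟩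
  have hQm : Q (Nat.findGreatest Q n) := Nat.findGreatest_spec (Nat.zero_le n) hQ0
  obtain ⟨t, hpair, hcard⟩ := hQm
  refine ⟨t, card_bound t hpair, ?_⟩
  intro γ
  by_contra hcov
  push_neg at hcov
  have hγt : γ ∉ t := fun h => hcov γ h 0 (hact_zero γ)
  have hpair' : ∀ a ∈ insert γ t, ∀ b ∈ insert γ t, a ≠ b → ¬ R a b := by
    intro a ha b hb hab
    rcases Finset.mem_insert.mp ha with rfl | hat
    · rcases Finset.mem_insert.mp hb with rfl | hbt
      · exact absurd rfl hab
      · rintro ⟨g, hg⟩; exact hcov b hbt g hg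
    · rcases Finset.mem_insert.mp hb with rfl | hbt
      · intro hRab
        obtain ⟨g, hg⟩ := hRsymm a b hRab
        exact hcov a hat g hg
      · exact hpair a hat b hbt hab
  have hcard' : (insert γ t).card = Nat.findGreatest Q n + 1 := by
    rw [Finset.card_insert_of_notMem hγt, hcard]
  have hle : Nat.findGreatest Q n + 1 ≤ n := by
    rw [← hcard']; exact card_bound _ hpair'
  have := Nat.le_findGreatest hle (show Q (Nat.findGreatest Q n + 1) from ⟨insert γ t, hpair', hcard'⟩)
  omega
end

section
/- Let (V, Γ(V), val) be a valued vector space over a valued field K and W ⊆ V a subspace. Then W is maximal in V (every family of nested balls with centers in W and radii in Γ(W) that has nonempty intersection in V has nonempty intersection in W) if and only if W has the optimal approximation property in V (for every v ∈ V∖W, the set {val(v − w) : w ∈ W} attains a maximum). -/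
/-- Let `(V, Γ(V), val)` be a valued vector space over a valued field `K` (with
additive value group `Γ` acting order-preservingly on the linear order `Γ(V)`),
and let `W ⊆ V` be a subspace.  Then `W` is maximal in `V` (every nested family of
balls with centers in `W` and radii in `Γ(W)` which has nonempty intersection in
`V` has nonempty intersection in `W`) if and only if `W` has the optimal
approximation property in `V` (for every `v ∈ V ∖ W` the set
`{val (v − w) : w ∈ W}` attains a maximum). -/
theorem maximal_in_iff_optimal_approximation
    (K : Type) [Field K] (Γ : Type) [AddCommGroup Γ] [LinearOrder Γ] [IsOrderedAddMonoid Γ]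
    (vK : K → Γ) (hvK : ∀ x y : K, x ≠ 0 → y ≠ 0 → vK (x * y) = vK x + vK y)
    (V : Type) [AddCommGroup V] [Module K V]
    (ΓV : Type) [LinearOrder ΓV]
    (act : Γ → ΓV → ΓV)
    (hact_zero : ∀ γ : ΓV, act 0 γ = γ)
    (hact_add : ∀ (g h : Γ) (γ : ΓV), act (g + h) γ = act g (act h γ))
    (hact_mono₁ : ∀ g : Γ, Monotone (act g))
    (hact_mono₂ : ∀ γ : ΓV, Monotone (fun g : Γ => act g γ))
    (val : V → ΓV)
    (hval_ultra : ∀ x y : V, min (val x) (val y) ≤ val (x + y))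
    (hval_smul : ∀ (α : K) (x : V), α ≠ 0 → val (α • x) = act (vK α) (val x))
    (W : Submodule K V) :
    -- `W` is maximal in `V`
    (∀ (ι : Type) (c : ι → V) (γ : ι → ΓV),
      (∀ i, c i ∈ W) →
      (∀ i, ∃ w ∈ W, val w = γ i) →
      (∀ i j,
        {x : V | x = c i ∨ γ i < val (x - c i)} ⊆ {x : V | x = c j ∨ γ j < val (x - c j)} ∨
        {x : V | x = c j ∨ γ j < val (x - c j)} ⊆ {x : V | x = c i ∨ γ i < val (x - c i)}) →
      (⋂ i, {x : V | x = c i ∨ γ i < val (x - c i)}).Nonempty →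
      ((W : Set V) ∩ ⋂ i, {x : V | x = c i ∨ γ i < val (x - c i)}).Nonempty)
    ↔
    -- `W` has the optimal approximation property in `V`
    (∀ v : V, v ∉ W → ∃ w ∈ W, ∀ w' ∈ W, val (v - w') ≤ val (v - w)) := by
  -- Basic consequences of the axioms
  have hvK1 : vK 1 = 0 := by
    have h := hvK 1 1 one_ne_zero one_ne_zero
    rw [mul_one] at h
    exact left_eq_add.mp h
  have hvKneg1 : vK (-1) = 0 := by
    have h := hvK (-1) (-1) (by norm_num) (by norm_num)
    rw [neg_mul_neg, mul_one, hvK1] at h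
    rcases lt_trichotomy (vK (-1)) 0 with hlt | heq | hgt
    · have := add_lt_add hlt hlt
      rw [add_zero, ← h] at this
      exact absurd this (lt_irrefl 0)
    · exact heq
    · have := add_lt_add hgt hgt
      rw [add_zero, ← h] at this
      exact absurd this (lt_irrefl 0)
  have hneg : ∀ x : V, val (-x) = val x := by
    intro x
    rw [← neg_one_smul K x, hval_smul (-1) x (by norm_num), hvKneg1, hact_zero]
  have hrev : ∀ x y : V, val (x - y) = val (y - x) := by
    intro x y
    rw [← hneg (x - y), neg_sub]
  have hsub : ∀ x y z : V, min (val (x - y)) (val (y - z)) ≤ val (x - z) := by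
    intro x y z
    have h := hval_ultra (x - y) (y - z)
    rwa [sub_add_sub_cancel] at h
  have hlt_sub : ∀ a b : V, val a < val b → val (a - b) = val a := by
    intro a b h
    apply le_antisymm
    · by_contra hc
      push_neg at hc
      have h1 := hval_ultra (a - b) b
      rw [sub_add_cancel] at h1
      exact absurd (lt_of_lt_of_le (lt_min hc h) h1) (lt_irrefl _)
    · have h1 := hval_ultra a (-b)
      rw [hneg, ← sub_eq_add_neg, min_eq_left h.le] at h1
      exact h1
  constructor
  · -- maximal → optimal approximation
    intro hmax v hvW
    by_contra hopt
    push_neg at hopt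
    -- hopt : ∀ w ∈ W, ∃ w' ∈ W, val (v - w) < val (v - w')
    set ι := {p : V × V // p.1 ∈ W ∧ p.2 ∈ W ∧ val (v - p.1) < val (v - p.2)} with hι
    obtain ⟨u, huW, hu⟩ := hmax ι (fun p => p.1.2) (fun p => val (v - p.1.1))
      (fun p => p.2.2.1)
      (by
        intro p
        refine ⟨p.1.2 - p.1.1, W.sub_mem p.2.2.1 p.2.1, ?_⟩
        have : p.1.2 - p.1.1 = (v - p.1.1) - (v - p.1.2) := by abel
        rw [this, hlt_sub _ _ p.2.2.2])
      (by
        have key : ∀ p q : ι, val (v - p.1.1) ≤ val (v - q.1.1) →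
            {x : V | x = q.1.2 ∨ val (v - q.1.1) < val (x - q.1.2)} ⊆
            {x : V | x = p.1.2 ∨ val (v - p.1.1) < val (x - p.1.2)} := by
          intro p q hpq x hx
          have hp2 : val (v - p.1.1) < val (v - p.1.2) := p.2.2.2
          have hq2 : val (v - p.1.1) < val (v - q.1.2) := lt_of_le_of_lt hpq q.2.2.2
          have hcc : val (v - p.1.1) < val (q.1.2 - p.1.2) := by
            have h1 := hsub q.1.2 v p.1.2
            rw [hrev q.1.2 v] at h1
            exact lt_of_lt_of_le (lt_min hq2 hp2) h1
          rcases hx with hx | hx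
          · right
            rw [hx]
            exact hcc
          · right
            have h1 := hsub x q.1.2 p.1.2
            exact lt_of_lt_of_le (lt_min (lt_of_le_of_lt hpq hx) hcc) h1
        intro p q
        rcases le_total (val (v - p.1.1)) (val (v - q.1.1)) with h | h
        · exact Or.inr (key p q h)
        · exact Or.inl (key q p h))
      (⟨v, Set.mem_iInter.mpr fun p => Or.inr p.2.2.2⟩)
    obtain ⟨w', hw'W, hlt⟩ := hopt u huW
    have hmem := Set.mem_iInter.mp hu (⟨(u, w'), huW, hw'W, hlt⟩ : ι)
    rcases hmem with h | h
    · rw [h] at hlt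
      exact absurd hlt (lt_irrefl _)
    · -- h : val (v - u) < val (u - w'), hlt : val (v - u) < val (v - w')
      have h1 := hsub v w' u
      rw [hrev w' u] at h1
      exact absurd (lt_of_lt_of_le (lt_min hlt h) h1) (lt_irrefl _)
  · -- optimal approximation → maximal
    intro hopt ι c γ hcW hγ hnest hne
    obtain ⟨x, hx⟩ := hne
    by_cases hxW : x ∈ W
    · exact ⟨x, hxW, hx⟩
    · obtain ⟨w, hwW, hw⟩ := hopt x hxW
      refine ⟨w, hwW, Set.mem_iInter.mpr fun i => ?_⟩
      have hxi := Set.mem_iInter.mp hx i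
      rcases hxi with h | h
      · exact absurd (h ▸ hcW i) hxW
      · right
        have h1 : val (x - c i) ≤ val (x - w) := hw (c i) (hcW i)
        have h2 := hsub w x (c i)
        rw [hrev w x] at h2
        calc γ i < val (x - c i) := h
          _ ≤ min (val (x - w)) (val (x - c i)) := le_min h1 le_rfl
          _ ≤ val (w - c i) := h2
end

section
/- Let K be a maximal valued field and V = K^n a valued K-vector space induced by a valued relation R. Then there exists a separated basis {v₁,…,vₙ} of K^n: for all λ₁,…,λₙ ∈ K, val(λ₁v₁ + ⋯ + λₙvₙ) = min{v(λᵢ) + val(vᵢ) : 1 ≤ i ≤ n}. -/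
section SepBasisAux

variable {K : Type} [Field K] {Γ : Type} [AddCommGroup Γ] [LinearOrder Γ] [IsOrderedAddMonoid Γ]
variable {ΓV : Type} [LinearOrder ΓV]

private lemma vK_one' {vK : K → Γ}
    (hvK : ∀ x y : K, x ≠ 0 → y ≠ 0 → vK (x * y) = vK x + vK y) : vK 1 = 0 := by
  have h := hvK 1 1 one_ne_zero one_ne_zero
  rw [mul_one] at h
  have : vK 1 + 0 = vK 1 + vK 1 := by rw [add_zero]; exact h
  exact (add_left_cancel this).symm

private lemma vK_negone' {vK : K → Γ}
    (hvK : ∀ x y : K, x ≠ 0 → y ≠ 0 → vK (x * y) = vK x + vK y) : vK (-1) = 0 := by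
  have h := hvK (-1) (-1) (by norm_num) (by norm_num)
  rw [neg_mul_neg, one_mul, vK_one' hvK] at h
  have h2 : vK (-1 : K) + vK (-1 : K) = 0 := h.symm
  rcases lt_trichotomy (vK (-1 : K)) 0 with hlt | heq | hgt
  · exfalso; have := add_lt_add hlt hlt; rw [h2, add_zero] at this; exact lt_irrefl _ this
  · exact heq
  · exfalso; have := add_lt_add hgt hgt; rw [h2, add_zero] at this; exact lt_irrefl _ this

private lemma vK_neg' {vK : K → Γ}
    (hvK : ∀ x y : K, x ≠ 0 → y ≠ 0 → vK (x * y) = vK x + vK y)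
    (x : K) (hx : x ≠ 0) : vK (-x) = vK x := by
  have h := hvK (-1) x (by norm_num) hx
  rw [neg_one_mul, vK_negone' hvK, zero_add] at h
  exact h

/-- The key one-dimensional lemma: spherical completeness of `K` with respect to a
"twisted" valuation `ν z = act (vK z) ve`, for chains of generalized balls. -/
private lemma lemL
    {vK : K → Γ}
    (hKmax : ∀ (ι : Type) (c : ι → K) (γ : ι → Γ),
      (∀ i j, ({x : K | x = c i ∨ γ i ≤ vK (x - c i)} ∩
               {x : K | x = c j ∨ γ j ≤ vK (x - c j)}).Nonempty) →
      (⋂ i, {x : K | x = c i ∨ γ i ≤ vK (x - c i)}).Nonempty)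
    {act : Γ → ΓV → ΓV}
    (hact_mono₂ : ∀ γ : ΓV, Monotone (fun g : Γ => act g γ))
    (S : Set ΓV)
    (ve : ΓV) (ν : K → ΓV)
    (hν : ∀ z : K, z ≠ 0 → ν z = act (vK z) ve)
    (hνu : ∀ a b : K, a ≠ 0 → b ≠ 0 → a + b ≠ 0 → min (ν a) (ν b) ≤ ν (a + b))
    (hνneg : ∀ z : K, z ≠ 0 → ν (-z) = ν z)
    (c : ΓV → K)
    (hc : ∀ γ ∈ S, ∀ δ ∈ S, γ ≤ δ → c δ = c γ ∨ γ ≤ ν (c δ - c γ)) :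
    ∃ x : K, ∀ γ ∈ S, x = c γ ∨ γ ≤ ν (x - c γ) := by
  -- combination helper
  have comb : ∀ (γ : ΓV) (p q : K), (p = q ∨ γ ≤ ν (p - q)) →
      ∀ x : K, (x = p ∨ γ ≤ ν (x - p)) → (x = q ∨ γ ≤ ν (x - q)) := by
    intro γ p q hpq x hxp
    by_cases hxq : x = q
    · exact Or.inl hxq
    right
    by_cases hxpe : x = p
    · rcases hpq with h1 | h1
      · exact absurd (hxpe.trans h1) hxq
      · rw [hxpe]; exact h1
    rcases hpq with h1 | h1
    · rcases hxp with h2 | h2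
      · exact absurd h2 hxpe
      · rw [← h1]; exact h2
    rcases hxp with h2 | h2
    · exact absurd h2 hxpe
    by_cases hpqe : p = q
    · rw [show x - q = x - p by rw [hpqe]]; exact h2
    have h3 : x - q = (x - p) + (p - q) := by ring
    rw [h3]
    exact le_trans (le_min h2 h1) (hνu _ _ (sub_ne_zero.mpr hxpe) (sub_ne_zero.mpr hpqe)
      (by rw [← h3]; exact sub_ne_zero.mpr hxq))
  by_cases hgood : ∀ γ ∈ S, ∃ δ, δ ∈ S ∧ γ ≤ δ ∧ ∃ r : Γ, γ ≤ act r ve ∧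
      ∀ M ∈ S, δ ≤ M → c M ≠ c δ → r ≤ vK (c M - c δ)
  · -- use hKmax on the family of balls
    choose! δf hδS hγδ rf hrf hlb using hgood
    have hpair : ∀ (i j : ↥S),
        ({x : K | x = c (δf i) ∨ rf i ≤ vK (x - c (δf i))} ∩
         {x : K | x = c (δf j) ∨ rf j ≤ vK (x - c (δf j))}).Nonempty := by
      rintro ⟨γ₁, h₁⟩ ⟨γ₂, h₂⟩
      have hd₁ := hδS γ₁ h₁
      have hd₂ := hδS γ₂ h₂
      set M := max (δf γ₁) (δf γ₂) with hM
      have hMS : M ∈ S := by rcases max_cases (δf γ₁) (δf γ₂) with ⟨h, _⟩ | ⟨h, _⟩ <;> rw [hM, h] <;> assumption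
      refine ⟨c M, ?_, ?_⟩ <;> simp only [Set.mem_setOf_eq]
      · by_cases he : c M = c (δf γ₁)
        · exact Or.inl he
        · exact Or.inr (hlb γ₁ h₁ M hMS (le_max_left _ _) he)
      · by_cases he : c M = c (δf γ₂)
        · exact Or.inl he
        · exact Or.inr (hlb γ₂ h₂ M hMS (le_max_right _ _) he)
    obtain ⟨x, hx⟩ := hKmax (↥S) (fun i => c (δf i)) (fun i => rf i) hpair
    refine ⟨x, fun γ hγ => ?_⟩
    have hxγ : x = c (δf γ) ∨ rf γ ≤ vK (x - c (δf γ)) :=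
      Set.mem_iInter.mp hx ⟨γ, hγ⟩
    have hx2 : x = c (δf γ) ∨ γ ≤ ν (x - c (δf γ)) := by
      by_cases hz : x = c (δf γ)
      · exact Or.inl hz
      rcases hxγ with h | h
      · exact Or.inl h
      · right
        rw [hν _ (sub_ne_zero.mpr hz)]
        exact le_trans (hrf γ hγ) (hact_mono₂ ve h)
    exact comb γ (c (δf γ)) (c γ) (hc γ hγ (δf γ) (hδS γ hγ) (hγδ γ hγ)) x hx2
  · push_neg at hgood
    obtain ⟨γs, hγsS, hbad⟩ := hgood
    refine ⟨c γs, fun γ hγ => ?_⟩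
    rcases le_total γ γs with hle | hle
    · exact hc γ hγ γs hγsS hle
    · rcases hc γs hγsS γ hγ hle with h | h
      · exact Or.inl h.symm
      · by_cases he : c γ = c γs
        · exact Or.inl he.symm
        right
        have hzne : c γ - c γs ≠ 0 := sub_ne_zero.mpr he
        set g := vK (c γ - c γs) with hg
        have hgve : γs ≤ act g ve := by rw [← hν _ hzne]; exact h
        obtain ⟨M, hMS, hδM, hMne, hMlt⟩ := hbad γ hγ hle g hgve
        have hMν : γ ≤ ν (c M - c γ) := by
          rcases hc γ hγ M hMS hδM with h' | h'
          · exact absurd h' hMne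
          · exact h'
        have : γ ≤ act g ve := by
          rw [hν _ (sub_ne_zero.mpr hMne)] at hMν
          exact le_trans hMν (hact_mono₂ ve hMlt.le)
        calc γ ≤ act g ve := this
          _ = ν (c γ - c γs) := (hν _ hzne).symm
          _ = ν (-(c γ - c γs)) := (hνneg _ hzne).symm
          _ = ν (c γs - c γ) := by rw [neg_sub]

end SepBasisAux
private lemma main_aux
    (K : Type) [Field K] (Γ : Type) [AddCommGroup Γ] [LinearOrder Γ] [IsOrderedAddMonoid Γ]
    (vK : K → Γ) (hvK : ∀ x y : K, x ≠ 0 → y ≠ 0 → vK (x * y) = vK x + vK y)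
    (hKmax : ∀ (ι : Type) (c : ι → K) (γ : ι → Γ),
      (∀ i j, ({x : K | x = c i ∨ γ i ≤ vK (x - c i)} ∩
               {x : K | x = c j ∨ γ j ≤ vK (x - c j)}).Nonempty) →
      (⋂ i, {x : K | x = c i ∨ γ i ≤ vK (x - c i)}).Nonempty)
    (ΓV : Type) [LinearOrder ΓV]
    (act : Γ → ΓV → ΓV)
    (hact_zero : ∀ γ : ΓV, act 0 γ = γ)
    (hact_add : ∀ (g h : Γ) (γ : ΓV), act (g + h) γ = act g (act h γ))
    (hact_mono₁ : ∀ g : Γ, Monotone (act g))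
    (hact_mono₂ : ∀ γ : ΓV, Monotone (fun g : Γ => act g γ)) :
    ∀ (n : ℕ) (val : (Fin n → K) → ΓV),
      (∀ x y : Fin n → K, min (val x) (val y) ≤ val (x + y)) →
      (∀ (α : K) (x : Fin n → K), α ≠ 0 → val (α • x) = act (vK α) (val x)) →
      ∃ b : Fin n → (Fin n → K),
        LinearIndependent K b ∧
        ∀ (lam : Fin n → K) (i : Fin n), lam i ≠ 0 →
          (∀ j : Fin n, lam j ≠ 0 →
            act (vK (lam i)) (val (b i)) ≤ act (vK (lam j)) (val (b j))) →
          val (∑ j : Fin n, lam j • b j) = act (vK (lam i)) (val (b i)) := by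
  intro n
  induction n with
  | zero =>
    intro val _ _
    refine ⟨fun i => i.elim0, ?_, ?_⟩
    · exact linearIndependent_empty_type
    · intro lam i; exact i.elim0
  | succ n ih =>
    intro val hu hs
    classical
    -- the embedding of K^n into K^(n+1)
    set E : (Fin n → K) → (Fin (n + 1) → K) := fun x => Fin.snoc x 0 with hEdef
    have Ecast : ∀ (x : Fin n → K) (i : Fin n), E x i.castSucc = x i := by
      intro x i; simp [hEdef]
    have Elast : ∀ x : Fin n → K, E x (Fin.last n) = 0 := by
      intro x; simp [hEdef]
    have Eadd : ∀ x y : Fin n → K, E (x + y) = E x + E y := by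
      intro x y; funext j
      induction j using Fin.lastCases with
      | last => rw [Pi.add_apply, Elast, Elast, Elast, add_zero]
      | cast i => rw [Pi.add_apply, Ecast, Ecast, Ecast, Pi.add_apply]
    have Esmul : ∀ (a : K) (x : Fin n → K), E (a • x) = a • E x := by
      intro a x; funext j
      induction j using Fin.lastCases with
      | last => rw [Pi.smul_apply, Elast, Elast, smul_eq_mul, mul_zero]
      | cast i => rw [Pi.smul_apply, Ecast, Ecast, Pi.smul_apply]
    have Esub : ∀ x y : Fin n → K, E (x - y) = E x - E y := by
      intro x y; funext j
      induction j using Fin.lastCases with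
      | last => rw [Pi.sub_apply, Elast, Elast, Elast, sub_zero]
      | cast i => rw [Pi.sub_apply, Ecast, Ecast, Ecast, Pi.sub_apply]
    have Ezero : E 0 = 0 := by
      funext j
      induction j using Fin.lastCases with
      | last => rw [Elast]; rfl
      | cast i => rw [Ecast]; rfl
    have Esum : ∀ F : Fin n → (Fin n → K), E (∑ j, F j) = ∑ j, E (F j) := by
      intro F; funext j
      induction j using Fin.lastCases with
      | last =>
        rw [Elast, Finset.sum_apply]
        exact (Finset.sum_eq_zero fun i _ => Elast (F i)).symm
      | cast i =>
        rw [Ecast, Finset.sum_apply, Finset.sum_apply]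
        exact Finset.sum_congr rfl fun k _ => (Ecast (F k) i).symm
    have Einj : ∀ x : Fin n → K, E x = 0 → x = 0 := by
      intro x h; funext i
      have := congrFun h i.castSucc
      rw [Ecast] at this; exact this
    -- the extra vector
    set v : Fin (n + 1) → K := Pi.single (Fin.last n) 1 with hvdef
    have vlast : v (Fin.last n) = 1 := by rw [hvdef]; exact Pi.single_eq_same _ _
    -- the induced valuation on K^n
    set val' : (Fin n → K) → ΓV := fun x => val (E x) with hval'def
    have hu' : ∀ x y : Fin n → K, min (val' x) (val' y) ≤ val' (x + y) := by
      intro x y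
      have h := hu (E x) (E y)
      rw [← Eadd] at h; exact h
    have hs' : ∀ (a : K) (x : Fin n → K), a ≠ 0 → val' (a • x) = act (vK a) (val' x) := by
      intro a x ha
      have h := hs a (E x) ha
      rw [← Esmul] at h; exact h
    obtain ⟨b', hb'li, hb'sep⟩ := ih val' hu' hs'
    -- generic facts about val
    have val_neg : ∀ x : Fin (n + 1) → K, x ≠ 0 → val (-x) = val x := by
      intro x hx
      have h := hs (-1) x (by norm_num)
      rw [vK_negone' hvK, hact_zero, neg_one_smul] at h
      exact h
    have val_add_lt : ∀ x y : Fin (n + 1) → K, x ≠ 0 → y ≠ 0 →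
        val x < val y → val (x + y) = val x := by
      intro x y hx hy hlt
      apply le_antisymm
      · by_contra hgt
        push_neg at hgt
        have h1 := hu (x + y) (-y)
        rw [add_neg_cancel_right, val_neg y hy] at h1
        exact absurd h1 (not_le.mpr (lt_min hgt hlt))
      · have h := hu x y
        rw [min_eq_left hlt.le] at h; exact h
    have val_sub_ge : ∀ x y : Fin (n + 1) → K, y ≠ 0 →
        min (val x) (val y) ≤ val (x - y) := by
      intro x y hy
      have h := hu x (-y)
      rw [val_neg y hy] at h
      rwa [← sub_eq_add_neg] at h
    -- act facts
    have act_cancel : ∀ (g : Γ) (a : ΓV), act (-g) (act g a) = a := by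
      intro g a; rw [← hact_add, neg_add_cancel, hact_zero]
    have act_strict : ∀ (g : Γ) (a c : ΓV), a < c → act g a < act g c := by
      intro g a c h
      rcases lt_or_eq_of_le (hact_mono₁ g h.le) with h' | h'
      · exact h'
      · exfalso
        have h2 := congrArg (act (-g)) h'
        rw [act_cancel, act_cancel] at h2
        exact absurd h2 (ne_of_lt h)
    have act_unit : ∀ t : K, t ≠ 0 → ∀ a : ΓV, act (vK t⁻¹) (act (vK t) a) = a := by
      intro t ht a
      rw [← hact_add, ← hvK t⁻¹ t (inv_ne_zero ht) ht, inv_mul_cancel₀ ht, vK_one' hvK, hact_zero]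
    -- separated-basis helpers
    have hmin : ∀ μ : Fin n → K, μ ≠ 0 → ∃ i₀, μ i₀ ≠ 0 ∧
        val' (∑ j, μ j • b' j) = act (vK (μ i₀)) (val' (b' i₀)) ∧
        ∀ j, μ j ≠ 0 → act (vK (μ i₀)) (val' (b' i₀)) ≤ act (vK (μ j)) (val' (b' j)) := by
      intro μ hμ
      have hne : (Finset.univ.filter (fun j => μ j ≠ 0)).Nonempty := by
        rcases Function.ne_iff.mp hμ with ⟨i, hi⟩
        exact ⟨i, Finset.mem_filter.mpr ⟨Finset.mem_univ _, hi⟩⟩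
      obtain ⟨i₀, hi₀mem, hi₀min⟩ :=
        Finset.exists_min_image _ (fun j => act (vK (μ j)) (val' (b' j))) hne
      have hi₀ : μ i₀ ≠ 0 := (Finset.mem_filter.mp hi₀mem).2
      have hminimal : ∀ j, μ j ≠ 0 →
          act (vK (μ i₀)) (val' (b' i₀)) ≤ act (vK (μ j)) (val' (b' j)) :=
        fun j hj => hi₀min j (Finset.mem_filter.mpr ⟨Finset.mem_univ _, hj⟩)
      exact ⟨i₀, hi₀, hb'sep μ i₀ hi₀ hminimal, hminimal⟩
    have sumne : ∀ μ : Fin n → K, μ ≠ 0 → (∑ j, μ j • b' j) ≠ 0 := by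
      intro μ hμ h
      exact hμ (funext (Fintype.linearIndependent_iff.mp hb'li μ h))
    -- the function to maximize
    set f : (Fin n → K) → ΓV := fun μ => val (v + E (∑ j, μ j • b' j)) with hfdef
    have hvadd_ne : ∀ s : Fin n → K, v + E s ≠ 0 := by
      intro s h
      have h2 := congrFun h (Fin.last n)
      rw [Pi.add_apply, vlast, Elast, Pi.zero_apply, add_zero] at h2
      exact one_ne_zero h2
    have fdiff : ∀ μ₁ μ₂ : Fin n → K, μ₂ ≠ μ₁ →
        min (f μ₂) (f μ₁) ≤ val' (∑ j, (μ₂ j - μ₁ j) • b' j) := by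
      intro μ₁ μ₂ hne
      have hsplit : E (∑ j, (μ₂ j - μ₁ j) • b' j) =
          (v + E (∑ j, μ₂ j • b' j)) - (v + E (∑ j, μ₁ j • b' j)) := by
        rw [show (∑ j, (μ₂ j - μ₁ j) • b' j)
              = (∑ j, μ₂ j • b' j) - (∑ j, μ₁ j • b' j) by
            rw [← Finset.sum_sub_distrib]
            exact Finset.sum_congr rfl fun j _ => sub_smul _ _ _]
        rw [Esub]
        abel
      have h2 := val_sub_ge (v + E (∑ j, μ₂ j • b' j)) (v + E (∑ j, μ₁ j • b' j)) (hvadd_ne _)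
      rw [← hsplit] at h2
      exact h2
    have coordest : ∀ (γ : ΓV) (μ : Fin n → K), γ ≤ val' (∑ j, μ j • b' j) →
        ∀ i, μ i ≠ 0 → γ ≤ val (μ i • E (b' i)) := by
      intro γ μ hγ i hi
      have hμne : μ ≠ 0 := fun h => hi (by rw [h]; rfl)
      obtain ⟨i₀, hi₀, hval0, hmin0⟩ := hmin μ hμne
      have heq : val (μ i • E (b' i)) = act (vK (μ i)) (val' (b' i)) := hs _ _ hi
      rw [heq]
      calc γ ≤ val' (∑ j, μ j • b' j) := hγ
        _ = act (vK (μ i₀)) (val' (b' i₀)) := hval0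
        _ ≤ act (vK (μ i)) (val' (b' i)) := hmin0 i hi
    -- attainment of the maximum
    have hattain : ∃ lamstar, ∀ μ, f μ ≤ f lamstar := by
      by_contra hcon
      push_neg at hcon
      set S : Set ΓV := Set.range f with hSdef
      have hS : ∀ γ ∈ S, ∃ δ ∈ S, γ < δ := by
        rintro γ ⟨μ, rfl⟩
        obtain ⟨μ', h'⟩ := hcon μ
        exact ⟨f μ', ⟨μ', rfl⟩, h'⟩
      set pick : ΓV → (Fin n → K) := fun γ => if hh : γ ∈ S then hh.choose else 0 with hpickdef
      have hpick : ∀ γ ∈ S, f (pick γ) = γ := by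
        intro γ hγ
        simp only [hpickdef, dif_pos hγ]
        exact hγ.choose_spec
      have hcc : ∀ i : Fin n, ∀ γ ∈ S, ∀ δ ∈ S, γ ≤ δ →
          pick δ i = pick γ i ∨ γ ≤ val ((pick δ i - pick γ i) • E (b' i)) := by
        intro i γ hγ δ hδ hle
        by_cases he : pick δ i = pick γ i
        · exact Or.inl he
        right
        have hμne : pick δ ≠ pick γ := fun h => he (congrFun h i)
        have h1 : min γ δ ≤ val' (∑ j, (pick δ j - pick γ j) • b' j) := by
          have h0 := fdiff (pick γ) (pick δ) hμne
          rw [hpick γ hγ, hpick δ hδ] at h0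
          rw [min_comm] at h0
          exact h0
        rw [min_eq_left hle] at h1
        exact coordest γ _ h1 i (sub_ne_zero.mpr he)
      have hLL : ∀ i : Fin n, ∃ x : K, ∀ γ ∈ S,
          x = pick γ i ∨ γ ≤ val ((x - pick γ i) • E (b' i)) := by
        intro i
        have hbne : E (b' i) ≠ 0 := fun h => hb'li.ne_zero i (Einj _ h)
        refine lemL hKmax hact_mono₂ S (val (E (b' i))) (fun z => val (z • E (b' i)))
          (fun z hz => hs z _ hz) ?_ ?_ (fun γ => pick γ i) (hcc i)
        · intro a c ha hc hac
          have h0 := hu (a • E (b' i)) (c • E (b' i))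
          rw [← add_smul] at h0
          exact h0
        · intro z hz
          show val ((-z) • E (b' i)) = val (z • E (b' i))
          rw [neg_smul]
          exact val_neg _ (smul_ne_zero hz hbne)
      choose xx hxx using hLL
      have hfinal : ∀ γ ∈ S, γ ≤ f xx := by
        intro γ hγ
        by_cases he : xx = pick γ
        · rw [he]
          exact le_of_eq (hpick γ hγ).symm
        · have hμ : (fun j => xx j - pick γ j) ≠ 0 := by
            intro h
            apply he
            funext j
            have h2 := congrFun h j
            simpa [sub_eq_zero] using h2
          have h1 : γ ≤ val' (∑ j, (xx j - pick γ j) • b' j) := by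
            obtain ⟨i₀, hi₀, hval0, hmin0⟩ := hmin _ hμ
            rw [hval0]
            rcases hxx i₀ γ hγ with h | h
            · exact absurd (sub_eq_zero.mpr h) hi₀
            · rw [hs _ _ hi₀] at h
              exact h
          have h2 : f xx = val ((v + E (∑ j, pick γ j • b' j)) + E (∑ j, (xx j - pick γ j) • b' j)) := by
            simp only [hfdef]
            congr 1
            rw [show (∑ j, (xx j - pick γ j) • b' j)
                  = (∑ j, xx j • b' j) - (∑ j, pick γ j • b' j) by
                rw [← Finset.sum_sub_distrib]
                exact Finset.sum_congr rfl fun j _ => sub_smul _ _ _]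
            rw [Esub]
            abel
          rw [h2]
          have h3 := hu (v + E (∑ j, pick γ j • b' j)) (E (∑ j, (xx j - pick γ j) • b' j))
          refine le_trans (le_min ?_ h1) h3
          exact le_of_eq (hpick γ hγ).symm
      obtain ⟨μ', hlt⟩ := hcon xx
      have h4 : f μ' ≤ f xx := hfinal (f μ') ⟨μ', rfl⟩
      exact absurd hlt (not_lt.mpr h4)
    obtain ⟨lamstar, hmax⟩ := hattain
    set u : Fin (n + 1) → K := v + E (∑ j, lamstar j • b' j) with hudef
    have hulast : u (Fin.last n) = 1 := by
      rw [hudef, Pi.add_apply, vlast, Elast, add_zero]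
    have hune : u ≠ 0 := by
      intro h
      have h2 := congrFun h (Fin.last n)
      rw [hulast, Pi.zero_apply] at h2
      exact one_ne_zero h2
    set M : ΓV := val u with hMdef
    have hfM : ∀ μ, f μ ≤ M := hmax
    -- the key computation
    have KLeq : ∀ (μ : Fin n → K) (t : K), μ ≠ 0 → t ≠ 0 →
        val (E (∑ j, μ j • b' j) + t • u)
          = min (val' (∑ j, μ j • b' j)) (act (vK t) M) := by
      intro μ t hμ ht
      have hAne : (∑ j, μ j • b' j) ≠ 0 := sumne μ hμ
      have hEAne : E (∑ j, μ j • b' j) ≠ 0 := fun h => hAne (Einj _ h)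
      have hBne : t • u ≠ 0 := smul_ne_zero ht hune
      have hvB : val (t • u) = act (vK t) M := hs t u ht
      have hvA : val (E (∑ j, μ j • b' j)) = val' (∑ j, μ j • b' j) := rfl
      rcases lt_trichotomy (val' (∑ j, μ j • b' j)) (act (vK t) M) with hlt | heq | hgt
      · rw [min_eq_left hlt.le]
        exact val_add_lt _ _ hEAne hBne (by rw [hvB, hvA]; exact hlt)
      · rw [min_eq_left heq.le]
        apply le_antisymm
        · by_contra hgt2
          push_neg at hgt2
          set X := E (∑ j, μ j • b' j) + t • u with hXdef
          have hXlast : X (Fin.last n) = t := by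
            rw [hXdef, Pi.add_apply, Elast, Pi.smul_apply, hulast, smul_eq_mul, mul_one, zero_add]
          have hXne : X ≠ 0 := by
            intro h
            have h2 := congrFun h (Fin.last n)
            rw [hXlast, Pi.zero_apply] at h2
            exact ht h2
          have hstep : val (t⁻¹ • X) = act (vK t⁻¹) (val X) := hs _ _ (inv_ne_zero ht)
          have hgt3 : M < act (vK t⁻¹) (val X) := by
            have h5 := act_strict (vK t⁻¹) _ _ (lt_of_le_of_lt (le_of_eq heq.symm) hgt2)
            rw [act_unit t ht] at h5
            exact h5
          have hXid : t⁻¹ • X = v + E (∑ j, (t⁻¹ * μ j + lamstar j) • b' j) := by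
            rw [hXdef, smul_add, smul_smul, inv_mul_cancel₀ ht, one_smul, hudef]
            rw [← Esmul]
            rw [show t⁻¹ • (∑ j, μ j • b' j) = ∑ j, (t⁻¹ * μ j) • b' j by
              rw [Finset.smul_sum]
              exact Finset.sum_congr rfl fun j _ => smul_smul _ _ _]
            rw [show (∑ j, (t⁻¹ * μ j + lamstar j) • b' j)
                  = (∑ j, (t⁻¹ * μ j) • b' j) + (∑ j, lamstar j • b' j) by
              rw [← Finset.sum_add_distrib]
              exact Finset.sum_congr rfl fun j _ => add_smul _ _ _]
            rw [Eadd]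
            abel
          have hcon2 : val (t⁻¹ • X) ≤ M := by
            rw [hXid]
            exact hfM _
          rw [hstep] at hcon2
          exact absurd hgt3 (not_lt.mpr hcon2)
        · have h6 := hu (E (∑ j, μ j • b' j)) (t • u)
          rw [hvB, hvA, ← heq, min_self] at h6
          exact h6
      · rw [min_eq_right hgt.le]
        have h7 := val_add_lt (t • u) (E (∑ j, μ j • b' j)) hBne hEAne (by rw [hvB, hvA]; exact hgt)
        rw [add_comm] at h7
        rw [h7, hvB]
    -- assemble the basis
    set b : Fin (n + 1) → (Fin (n + 1) → K) := Fin.snoc (fun i => E (b' i)) u with hbdef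
    have hbcast : ∀ i : Fin n, b i.castSucc = E (b' i) := by
      intro i; simp [hbdef]
    have hblast : b (Fin.last n) = u := by
      simp [hbdef]
    have hsumsplit : ∀ lam : Fin (n + 1) → K,
        (∑ j, lam j • b j) = E (∑ i, lam i.castSucc • b' i) + lam (Fin.last n) • u := by
      intro lam
      rw [Fin.sum_univ_castSucc]
      congr 1
      · rw [Esum]
        refine Finset.sum_congr rfl fun i _ => ?_
        rw [Esmul, hbcast]
      · rw [hblast]
    refine ⟨b, ?_, ?_⟩
    · -- linear independence
      rw [Fintype.linearIndependent_iff]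
      intro g hg
      rw [hsumsplit] at hg
      have hglast : g (Fin.last n) = 0 := by
        have h2 := congrFun hg (Fin.last n)
        rw [Pi.add_apply, Elast, Pi.smul_apply, hulast, smul_eq_mul, mul_one, zero_add,
          Pi.zero_apply] at h2
        exact h2
      rw [hglast, zero_smul, add_zero] at hg
      have hcoord : ∀ i : Fin n, g i.castSucc = 0 :=
        Fintype.linearIndependent_iff.mp hb'li _ (Einj _ hg)
      intro j
      induction j using Fin.lastCases with
      | last => exact hglast
      | cast i => exact hcoord i
    · -- separatedness
      intro lam i₀ h0 hminimal
      have hTcast : ∀ i : Fin n,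
          act (vK (lam i.castSucc)) (val (b i.castSucc)) = act (vK (lam i.castSucc)) (val' (b' i)) := by
        intro i; rw [hbcast]
      have hTlast : act (vK (lam (Fin.last n))) (val (b (Fin.last n)))
          = act (vK (lam (Fin.last n))) M := by
        rw [hblast]
      by_cases htz : lam (Fin.last n) = 0
      · -- last coefficient vanishes
        have hi₀ne : i₀ ≠ Fin.last n := fun h => h0 (by rw [h]; exact htz)
        obtain ⟨k, hk⟩ := Fin.exists_castSucc_eq.mpr hi₀ne
        have hμk : lam k.castSucc ≠ 0 := by rw [hk]; exact h0
        have hsum0 : (∑ j, lam j • b j) = E (∑ i, lam i.castSucc • b' i) := by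
          rw [hsumsplit, htz, zero_smul, add_zero]
        rw [hsum0, ← hk, hTcast k]
        exact hb'sep (fun i => lam i.castSucc) k hμk (fun j hj => by
          have h3 := hminimal j.castSucc hj
          rw [← hk, hTcast k, hTcast j] at h3
          exact h3)
      · by_cases hμz : (fun i => lam i.castSucc) = (0 : Fin n → K)
        · -- only the last coefficient
          have hi₀ : i₀ = Fin.last n := by
            by_contra hne
            obtain ⟨k, hk⟩ := Fin.exists_castSucc_eq.mpr hne
            exact h0 (by rw [← hk]; exact congrFun hμz k)
          have hsum0 : (∑ j, lam j • b j) = lam (Fin.last n) • u := by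
            rw [hsumsplit, show (∑ i, lam i.castSucc • b' i) = 0 by
                refine Finset.sum_eq_zero fun i _ => ?_
                have h9 := congrFun hμz i
                simp only [Pi.zero_apply] at h9
                rw [h9, zero_smul],
              Ezero, zero_add]
          rw [hsum0, hi₀, hTlast]
          exact hs _ _ htz
        · -- generic case
          have hKL := KLeq (fun i => lam i.castSucc) (lam (Fin.last n)) hμz htz
          rw [hsumsplit, hKL]
          rcases Fin.eq_castSucc_or_eq_last i₀ with ⟨k, hk⟩ | hk
          · -- minimum attained in the hyperplane
            have hμk : lam k.castSucc ≠ 0 := by rw [← hk]; exact h0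
            have hA : val' (∑ j, lam j.castSucc • b' j)
                = act (vK (lam k.castSucc)) (val' (b' k)) := by
              exact hb'sep (fun i => lam i.castSucc) k hμk (fun j hj => by
                have h3 := hminimal j.castSucc hj
                rw [hk, hTcast k, hTcast j] at h3
                exact h3)
            rw [hA]
            have hle2 : act (vK (lam k.castSucc)) (val' (b' k)) ≤ act (vK (lam (Fin.last n))) M := by
              have h3 := hminimal (Fin.last n) htz
              rw [hk, hTcast k, hTlast] at h3
              exact h3
            rw [min_eq_left hle2, hk, hTcast k]
          · -- minimum attained at the last vector
            have hge2 : act (vK (lam (Fin.last n))) M ≤ val' (∑ j, lam j.castSucc • b' j) := by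
              obtain ⟨i₁, hi₁, hval1, _⟩ := hmin _ hμz
              rw [hval1]
              have h3 := hminimal i₁.castSucc hi₁
              rw [hk, hTlast, hTcast i₁] at h3
              exact h3
            rw [min_eq_right hge2, hk, hTlast]

/-- Let `K` be a maximal (spherically complete) valued field and `V = K^n` a valued
`K`-vector space (as induced by a valued relation `R`).  Then `K^n` has a separated
basis `v₁, …, vₙ`: for all `λ₁, …, λₙ ∈ K`,
`val (λ₁v₁ + ⋯ + λₙvₙ) = min {v(λᵢ) + val vᵢ : λᵢ ≠ 0}`. -/
theorem maximal_field_separated_basis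
    (K : Type) [Field K] (Γ : Type) [AddCommGroup Γ] [LinearOrder Γ] [IsOrderedAddMonoid Γ]
    (vK : K → Γ) (hvK : ∀ x y : K, x ≠ 0 → y ≠ 0 → vK (x * y) = vK x + vK y)
    -- `K` is maximal: every pairwise-consistent family of (closed) balls in `K`
    -- has a common point
    (hKmax : ∀ (ι : Type) (c : ι → K) (γ : ι → Γ),
      (∀ i j, ({x : K | x = c i ∨ γ i ≤ vK (x - c i)} ∩
               {x : K | x = c j ∨ γ j ≤ vK (x - c j)}).Nonempty) →
      (⋂ i, {x : K | x = c i ∨ γ i ≤ vK (x - c i)}).Nonempty)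
    (n : ℕ)
    (ΓV : Type) [LinearOrder ΓV]
    (act : Γ → ΓV → ΓV)
    (hact_zero : ∀ γ : ΓV, act 0 γ = γ)
    (hact_add : ∀ (g h : Γ) (γ : ΓV), act (g + h) γ = act g (act h γ))
    (hact_mono₁ : ∀ g : Γ, Monotone (act g))
    (hact_mono₂ : ∀ γ : ΓV, Monotone (fun g : Γ => act g γ))
    (val : (Fin n → K) → ΓV)
    (hval_ultra : ∀ x y : Fin n → K, min (val x) (val y) ≤ val (x + y))
    (hval_smul : ∀ (α : K) (x : Fin n → K), α ≠ 0 → val (α • x) = act (vK α) (val x)) :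
    ∃ b : Fin n → (Fin n → K),
      LinearIndependent K b ∧
      ∀ (lam : Fin n → K) (i : Fin n), lam i ≠ 0 →
        (∀ j : Fin n, lam j ≠ 0 →
          act (vK (lam i)) (val (b i)) ≤ act (vK (lam j)) (val (b j))) →
        val (∑ j : Fin n, lam j • b j) = act (vK (lam i)) (val (b i)) := by
  exact main_aux K Γ vK hvK hKmax ΓV act hact_zero hact_add hact_mono₁ hact_mono₂
    n val hval_ultra hval_smul
end
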